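/- Let A, B be complex unital Banach algebras with A semisimple, and let φ, ψ : A → B be surjective maps satisfying: for all x, y ∈ A and λ ∈ ℂ, λx + y ∈ G(A) iff λφ(x) + ψ(y) ∈ G(B). Then φ(0) = 0 and ψ(0) = 0. -/

import Mathlib

section Aux

variable {A : Type*} [NormedRing A] [NormedAlgebra ℂ A] [CompleteSpace A]

omit [CompleteSpace A] in
lemma isUnit_smul_iff_aux {μ : ℂ} (hμ : μ ≠ 0) (a : A) :
    IsUnit (μ • a) ↔ IsUnit a := by
  have hu : IsUnit (algebraMap ℂ A μ) := hμ.isUnit.map (algebraMap ℂ A)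
  rw [Algebra.smul_def]
  constructor
  · intro h'
    have := hu.unit⁻¹.isUnit.mul h'
    rwa [← mul_assoc, IsUnit.val_inv_mul, one_mul] at this
  · exact fun h' => hu.mul h'

/-- every element of a complex Banach algebra is a unit plus a nonzero scalar -/
lemma exists_unit_add (y : A) : ∃ (u : Aˣ) (μ : ℂ), μ ≠ 0 ∧ y = ↑u + μ • 1 := by
  set r : ℝ := ‖y‖ + 1 with hr
  have hrpos : (0:ℝ) < r := by positivity
  set μ : ℂ := (r : ℂ) with hμdef
  have hμ : μ ≠ 0 := by
    simp [hμdef, Complex.ofReal_ne_zero, ne_of_gt hrpos]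
  have hnorm : ‖μ⁻¹ • y‖ < 1 := by
    rw [norm_smul, norm_inv, hμdef, Complex.norm_real, Real.norm_of_nonneg hrpos.le]
    rw [inv_mul_lt_iff₀ hrpos, mul_one, hr]
    linarith
  have hunit : IsUnit (y - μ • (1:A)) := by
    have h1 : IsUnit ((1:A) - μ⁻¹ • y) := by
      have := (Units.oneSub _ hnorm).isUnit
      rwa [Units.val_oneSub] at this
    have h2 : IsUnit ((-μ) • ((1:A) - μ⁻¹ • y)) :=
      (isUnit_smul_iff_aux (neg_ne_zero.mpr hμ) _).mpr h1
    have : (-μ) • ((1:A) - μ⁻¹ • y) = y - μ • 1 := by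
      rw [smul_sub, smul_smul]
      simp only [neg_mul, mul_inv_cancel₀ hμ, neg_smul, one_smul]
      abel
    rwa [this] at h2
  obtain ⟨u, hu⟩ := hunit
  exact ⟨u, μ, hμ, by rw [hu]; abel⟩

/-- Zemánek-type: if adding x preserves invertibility, x is in the Jacobson radical. -/
lemma mem_jacobson_of_add_unit {x : A} (hx : ∀ z : A, IsUnit (z + x) ↔ IsUnit z) :
    x ∈ Ideal.jacobson (⊥ : Ideal A) := by
  -- closure properties of P
  set P : A → Prop := fun s => ∀ z : A, IsUnit (z + s) ↔ IsUnit z with hP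
  have hadd : ∀ s t, P s → P t → P (s + t) := by
    intro s t hs ht z
    rw [← add_assoc]
    exact (ht (z + s)).trans (hs z)
  have humul : ∀ (u v : Aˣ) (a : A), IsUnit (↑u * a * ↑v) ↔ IsUnit a := by
    intro u v a
    rw [Units.isUnit_mul_units, Units.isUnit_units_mul]
  have hmul : ∀ s, P s → ∀ (u v : Aˣ), P (↑u * s * ↑v) := by
    intro s hs u v z
    have key : z + ↑u * s * ↑v = ↑u * (↑u⁻¹ * z * ↑v⁻¹ + s) * ↑v := by
      simp [mul_add, add_mul, mul_assoc]
    rw [key, humul, hs (↑u⁻¹ * z * ↑v⁻¹)]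
    exact humul u⁻¹ v⁻¹ z
  have hPmulx : ∀ y : A, P (y * x) := by
    intro y
    obtain ⟨u, μ, hμ, rfl⟩ := exists_unit_add y
    have h1 : P (↑u * x) := by
      have := hmul x hx u 1
      simpa using this
    have h2 : P ((μ • (1:A)) * x) := by
      have hμu : IsUnit (μ • (1:A)) := by
        rw [isUnit_smul_iff_aux hμ]; exact isUnit_one
      have := hmul x hx hμu.unit 1
      simpa [hμu.unit_spec] using this
    have := hadd _ _ h1 h2
    rwa [← add_mul] at this
  have hunit : ∀ y : A, IsUnit (1 - y * x) := by
    intro y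
    have := (hPmulx y (1 - y * x)).mp
    simp only [sub_add_cancel] at this
    exact this isUnit_one
  -- membership in every maximal ideal
  rw [Ideal.jacobson]
  rw [Ideal.mem_sInf]
  rintro M ⟨-, hM⟩
  by_contra hxM
  have hlt : M < M ⊔ Ideal.span {x} := by
    refine lt_of_le_of_ne le_sup_left (fun e => hxM ?_)
    rw [e]
    exact Submodule.mem_sup_right (Ideal.subset_span rfl)
  have htop : M ⊔ Ideal.span {x} = ⊤ := hM.1.2 _ hlt
  have h1 : (1 : A) ∈ M ⊔ Ideal.span {x} := htop ▸ Submodule.mem_top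
  obtain ⟨m, hm, z, hz, hmz⟩ := Submodule.mem_sup.mp h1
  rw [Ideal.span, Submodule.mem_span_singleton] at hz
  obtain ⟨r, hrz⟩ := hz
  have hm' : m = 1 - r * x := by rw [← hmz, ← hrz, smul_eq_mul]; abel
  exact hM.ne_top (M.eq_top_of_isUnit_mem hm (hm' ▸ hunit r))

end Aux

theorem preservers_map_zero_to_zero {A B : Type*} [NormedRing A] [NormedAlgebra ℂ A]
    [CompleteSpace A] [NormedRing B] [NormedAlgebra ℂ B] [CompleteSpace B]
    (hA : Ideal.jacobson (⊥ : Ideal A) = ⊥) (φ ψ : A → B)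
    (hφ : Function.Surjective φ) (hψ : Function.Surjective ψ)
    (h : ∀ (x y : A) (lam : ℂ), IsUnit (lam • x + y) ↔ IsUnit (lam • φ x + ψ y)) :
    φ 0 = 0 ∧ ψ 0 = 0 := by
  have F1 : ∀ y : A, (IsUnit y ↔ IsUnit (ψ y)) := by
    intro y
    have := h 0 y 0
    simpa using this
  -- L' : adding scalar multiples of φ 0 preserves invertibility in B
  have L' : ∀ (c : B) (lam : ℂ), IsUnit (lam • φ 0 + c) ↔ IsUnit c := by
    intro c lam
    obtain ⟨y, rfl⟩ := hψ c
    have := h 0 y lam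
    simp only [smul_zero, zero_add] at this
    rw [← this, ← F1 y]
  -- K : via h with y = 0
  have K : ∀ (x : A) (μ : ℂ), μ ≠ 0 → (IsUnit x ↔ IsUnit (φ x + μ • ψ 0)) := by
    intro x μ hμ
    have := h x 0 μ⁻¹
    have hμ' : μ⁻¹ ≠ 0 := inv_ne_zero hμ
    rw [add_zero, isUnit_smul_iff_aux hμ'] at this
    rw [this]
    have : μ⁻¹ • φ x + ψ 0 = μ⁻¹ • (φ x + μ • ψ 0) := by
      rw [smul_add, smul_smul, inv_mul_cancel₀ hμ, one_smul]
    rw [this, isUnit_smul_iff_aux hμ']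
  -- L forward: adding scalar multiples of (ψ 0) preserves invertibility
  have Lf : ∀ (d : B), IsUnit d → ∀ (μ : ℂ), μ ≠ 0 → IsUnit (d + μ • ψ 0) := by
    intro d hd μ hμ
    obtain ⟨x, rfl⟩ := hφ d
    rw [← K x μ hμ]
    -- show IsUnit x from IsUnit (φ x) via a small perturbation
    obtain ⟨u, hu⟩ := hd
    set c : ℝ := ‖(↑u⁻¹ : B) * ψ 0‖ with hc
    have hcpos : (0:ℝ) < c + 1 := by positivity
    set μ₀ : ℂ := ((c + 1 : ℝ) : ℂ)⁻¹ with hμ₀def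
    have hcc : ((c + 1 : ℝ) : ℂ) ≠ 0 := by exact_mod_cast ne_of_gt hcpos
    have hμ₀ : μ₀ ≠ 0 := inv_ne_zero hcc
    rw [K x μ₀ hμ₀, ← hu]
    have key : (↑u : B) + μ₀ • ψ 0 = ↑u * (1 + μ₀ • ((↑u⁻¹ : B) * ψ 0)) := by
      rw [mul_add, mul_one, mul_smul_comm, ← mul_assoc, Units.mul_inv, one_mul]
    rw [key, u.isUnit_units_mul]
    have hnorm : ‖-(μ₀ • ((↑u⁻¹ : B) * ψ 0))‖ < 1 := by
      rw [norm_neg, norm_smul, hμ₀def, norm_inv, Complex.norm_real,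
        Real.norm_of_nonneg hcpos.le, ← hc]
      rw [inv_mul_lt_iff₀ hcpos, mul_one]
      linarith
    have := (Units.oneSub _ hnorm).isUnit
    rwa [Units.val_oneSub, sub_neg_eq_add] at this
  have L : ∀ (d : B) (μ : ℂ), μ ≠ 0 → (IsUnit (d + μ • ψ 0) ↔ IsUnit d) := by
    intro d μ hμ
    constructor
    · intro hd
      have := Lf (d + μ • ψ 0) hd (-μ) (neg_ne_zero.mpr hμ)
      rwa [add_assoc, ← add_smul, add_neg_cancel, zero_smul, add_zero] at this
    · intro hd; exact Lf d hd μ hμ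
  -- φ 0 = 0
  obtain ⟨y1, hy1⟩ := hψ (φ 0)
  obtain ⟨y2, hy2⟩ := hψ 0
  have hz1 : ∀ z : A, IsUnit (z + y1) ↔ IsUnit (φ z) := by
    intro z
    have := h z y1 1
    rw [one_smul, one_smul, hy1] at this
    rw [this, add_comm, ← one_smul ℂ (φ 0)]
    exact L' (φ z) 1
  have hz2 : ∀ z : A, IsUnit (z + y2) ↔ IsUnit (φ z) := by
    intro z
    have := h z y2 1
    rw [one_smul, one_smul, hy2, add_zero] at this
    exact this
  have hdiff : ∀ w : A, IsUnit (w + (y1 - y2)) ↔ IsUnit w := by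
    intro w
    have e1 : w + (y1 - y2) = (w - y2) + y1 := by abel
    have e2 : w = (w - y2) + y2 := by abel
    rw [e1, hz1 (w - y2), ← hz2 (w - y2), ← e2]
  have : y1 - y2 ∈ Ideal.jacobson (⊥ : Ideal A) := mem_jacobson_of_add_unit hdiff
  rw [hA, Ideal.mem_bot, sub_eq_zero] at this
  have hφ0 : φ 0 = 0 := by rw [← hy1, this, hy2]
  refine ⟨hφ0, ?_⟩
  -- ψ 0 = 0
  obtain ⟨x1, hx1⟩ := hφ (ψ 0)
  have hzx : ∀ z : A, IsUnit (z + x1) ↔ IsUnit z := by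
    intro z
    have h1 := h x1 z 1
    rw [one_smul, one_smul, hx1] at h1
    have e : ψ 0 + ψ z = ψ z + (1 : ℂ) • ψ 0 := by rw [one_smul, add_comm]
    rw [add_comm z x1, h1, e, L (ψ z) 1 one_ne_zero, ← F1 z]
  have : x1 ∈ Ideal.jacobson (⊥ : Ideal A) := mem_jacobson_of_add_unit hzx
  rw [hA, Ideal.mem_bot] at this
  rw [← hx1, this, hφ0]
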